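/- Let m ≥ 1 and let f : ℝ^m → ℝ^m be a function for which there exist θ ∈ ℝ^m and δ > 0 such that ⟨x − θ, f(x)⟩ ≥ δ‖x − θ‖² for all x ∈ ℝ^m, and there exist κ₁, κ₂ > 0 such that ‖f(x)‖ ≤ κ₁‖x − θ‖ + κ₂ for all x. Let (μ_n)_{n≥0} be a normal sequence and let (ξ_n)_{n≥1} be random vectors in ℝ^m such that the series ∑_{i≥0} μ_i ξ_{i+1} converges almost surely. Then the Robbins–Monro procedure x_0 = x0 (a fixed starting point), x_{n+1} = x_n − μ_n (f(x_n) + ξ_{n+1}), converges to θ almost surely. -/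

import Mathlib

open Filter Finset MeasureTheory

/-- A sequence `(μ_n)` is *normal* if `μ_0 = 1`, `μ_n ∈ (0,1)` for `n ≥ 1`,
`∑ μ_n = ∞`, and `μ_n → 0`. -/
def NormalSeq (μ : ℕ → ℝ) : Prop :=
  μ 0 = 1 ∧ (∀ n, 1 ≤ n → μ n ∈ Set.Ioo (0 : ℝ) 1) ∧
    Filter.Tendsto (fun n => ∑ i ∈ Finset.range n, μ i) Filter.atTop Filter.atTop ∧
    Filter.Tendsto μ Filter.atTop (nhds 0)

lemma key_real (δ : ℝ) (hδ : 0 < δ) (μ β γ a : ℕ → ℝ)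
    (hμpos : ∀ n, 0 ≤ μ n) (ha : ∀ n, 0 ≤ a n)
    (hdiv : Tendsto (fun n => ∑ i ∈ Finset.range n, μ i) atTop atTop)
    (hβ : Tendsto β atTop (nhds 0)) (hγ : Tendsto γ atTop (nhds 0))
    (hμ0 : Tendsto μ atTop (nhds 0))
    (hrec : ∀ n, a (n+1) ≤ a n * (1 - 2*δ*μ n + μ n * β n) + μ n * γ n) :
    Tendsto a atTop (nhds 0) := by
  rw [NormedAddCommGroup.tendsto_nhds_zero]
  intro ε hε
  have hε2 : 0 < ε/2 := by linarith
  have h1 : ∀ᶠ n in atTop, β n < δ := hβ.eventually_lt_const hδ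
  have h2 : ∀ᶠ n in atTop, γ n < δ * (ε/2) := hγ.eventually_lt_const (by positivity)
  have h3 : ∀ᶠ n in atTop, μ n < 1/δ := hμ0.eventually_lt_const (by positivity)
  obtain ⟨N, hN⟩ := eventually_atTop.1 ((h1.and h2).and h3)
  set b : ℕ → ℝ := fun n => max (a n - ε/2) 0 with hb
  have hbnn : ∀ n, 0 ≤ b n := fun n => le_max_right _ _
  have hstep : ∀ n, N ≤ n → b (n+1) ≤ (1 - δ * μ n) * b n := by
    intro n hn
    obtain ⟨⟨hb1, hb2⟩, hb3⟩ := hN n hn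
    have hfac : 0 ≤ 1 - δ * μ n := by
      rw [lt_div_iff₀ hδ] at hb3
      nlinarith
    have key : a (n+1) - ε/2 ≤ (1 - δ * μ n) * (a n - ε/2) := by
      have := hrec n
      have h4 := hμpos n
      have h5 := ha n
      nlinarith [mul_nonneg h4 h5, mul_le_mul_of_nonneg_left hb1.le h4,
        mul_le_mul_of_nonneg_right (mul_le_mul_of_nonneg_left hb1.le h4) h5]
    have : a (n+1) - ε/2 ≤ (1 - δ * μ n) * b n :=
      key.trans (mul_le_mul_of_nonneg_left (le_max_left _ _) hfac)
    exact max_le this (mul_nonneg hfac (hbnn n))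
  have hexp : ∀ k, b (N + k) ≤ b N * Real.exp (-(δ * ∑ i ∈ range k, μ (N + i))) := by
    intro k
    induction k with
    | zero => simp
    | succ k ih =>
      have h6 := hstep (N + k) (Nat.le_add_right _ _)
      have h7 : (1 - δ * μ (N + k)) * b (N + k) ≤
          Real.exp (-(δ * μ (N + k))) * b (N + k) := by
        apply mul_le_mul_of_nonneg_right _ (hbnn _)
        nlinarith [Real.add_one_le_exp (-(δ * μ (N + k)))]
      calc b (N + (k+1)) = b (N + k + 1) := by ring_nf
        _ ≤ (1 - δ * μ (N + k)) * b (N + k) := h6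
        _ ≤ Real.exp (-(δ * μ (N + k))) * b (N + k) := h7
        _ ≤ Real.exp (-(δ * μ (N + k))) * (b N * Real.exp (-(δ * ∑ i ∈ range k, μ (N + i)))) :=
            mul_le_mul_of_nonneg_left ih (Real.exp_pos _).le
        _ = b N * Real.exp (-(δ * ∑ i ∈ range (k+1), μ (N + i))) := by
            rw [Finset.sum_range_succ, mul_add, neg_add, Real.exp_add]; ring
  have hsum : Tendsto (fun k => ∑ i ∈ range k, μ (N + i)) atTop atTop := by
    have h8 : Tendsto (fun k => ∑ i ∈ range (N + k), μ i) atTop atTop :=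
      hdiv.comp (tendsto_atTop_mono (fun k => Nat.le_add_left k N) tendsto_id)
    have h9 : ∀ k, ∑ i ∈ range k, μ (N + i) = (∑ i ∈ range (N + k), μ i) - ∑ i ∈ range N, μ i := by
      intro k; rw [Finset.sum_range_add]; ring
    simp only [h9]
    exact h8.atTop_add tendsto_const_nhds
  have hexp0 : Tendsto (fun k => b N * Real.exp (-(δ * ∑ i ∈ range k, μ (N + i)))) atTop (nhds 0) := by
    have : Tendsto (fun k => Real.exp (-(δ * ∑ i ∈ range k, μ (N + i)))) atTop (nhds 0) :=
      Real.tendsto_exp_atBot.comp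
        (tendsto_neg_atBot_iff.2 (hsum.const_mul_atTop hδ))
    simpa using this.const_mul (b N)
  have hfin : ∀ᶠ k in atTop, b (N + k) < ε/2 := by
    filter_upwards [hexp0.eventually_lt_const hε2] with k hk
    exact lt_of_le_of_lt (hexp k) hk
  obtain ⟨K, hK⟩ := eventually_atTop.1 hfin
  rw [eventually_atTop]
  refine ⟨N + K, fun n hn => ?_⟩
  have hbne : b n < ε/2 := by
    have hne : n = N + (n - N) := by omega
    rw [hne]; exact hK _ (by omega)
  have han : a n < ε := by
    have h10 : a n - ε/2 ≤ b n := le_max_left _ _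
    linarith
  rw [Real.norm_eq_abs, abs_of_nonneg (ha n)]
  exact han


lemma step_ineq (δ κ₁ κ₂ C μ v t F U I J A : ℝ)
    (hδ : 0 < δ) (hκ₁ : 0 < κ₁) (hκ₂ : 0 < κ₂) (hC : 0 < C) (hμ : 0 < μ)
    (hv : 0 ≤ v) (ht : 0 ≤ t) (hF : 0 ≤ F) (hU : 0 ≤ U)
    (e1 : A = v^2 - 2*μ*(I - J) + μ^2*F^2)
    (e2 : δ*U^2 ≤ I) (e3 : J ≤ t*F) (e4 : v^2 - 2*v*t ≤ U^2)
    (e5 : F ≤ κ₁*U + κ₂) (e6 : U ≤ v + t) (e7 : κ₁*t + κ₂ ≤ C) :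
    A ≤ v^2*(1 - 2*δ*μ + μ*(2*(2*δ+κ₁)*t + 2*κ₁^2*μ)) + μ*(2*(2*δ+κ₁+C)*t + 2*C^2*μ) := by
  have hFv : F ≤ κ₁*v + C := by
    nlinarith [mul_le_mul_of_nonneg_left e6 hκ₁.le]
  have hF2 : F^2 ≤ 2*κ₁^2*v^2 + 2*C^2 := by
    nlinarith [sq_nonneg (κ₁*v - C), mul_le_mul hFv hFv hF (by positivity)]
  have hJ : J ≤ t*(κ₁*v + C) :=
    e3.trans (mul_le_mul_of_nonneg_left hFv ht)
  have hI : δ*(v^2 - 2*v*t) ≤ I := (mul_le_mul_of_nonneg_left e4 hδ.le).trans e2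
  have hvt : v * t ≤ t + t*v^2 := by
    nlinarith [mul_nonneg ht (sq_nonneg (v - 1/2))]
  have p1 : 2*μ*(δ*(v^2 - 2*v*t)) ≤ 2*μ*I := mul_le_mul_of_nonneg_left hI (by positivity)
  have p2 : 2*μ*J ≤ 2*μ*(t*(κ₁*v + C)) := mul_le_mul_of_nonneg_left hJ (by positivity)
  have p3 : μ^2*F^2 ≤ μ^2*(2*κ₁^2*v^2 + 2*C^2) := mul_le_mul_of_nonneg_left hF2 (sq_nonneg _)
  have p4 : (4*δ+2*κ₁)*μ*(v*t) ≤ (4*δ+2*κ₁)*μ*(t + t*v^2) :=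
    mul_le_mul_of_nonneg_left hvt (by positivity)
  linarith [p1, p2, p3, p4]

set_option maxHeartbeats 1000000 in
/-- Robbins–Monro.  Let `f : ℝ^m → ℝ^m` satisfy
`⟨x − θ, f(x)⟩ ≥ δ‖x − θ‖²` and `‖f(x)‖ ≤ κ₁‖x − θ‖ + κ₂`.  Let `(μ_n)` be a normal sequence
and let `(ξ_n)` be random vectors such that `∑ μ_i ξ_{i+1}` converges almost surely.  Then the
Robbins–Monro procedure `x_{n+1} = x_n − μ_n (f(x_n) + ξ_{n+1})`, `x_0 = x0`, converges to `θ`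
almost surely. -/
theorem stmt_17 (m : ℕ) (hm : 1 ≤ m)
    (f : EuclideanSpace ℝ (Fin m) → EuclideanSpace ℝ (Fin m))
    (θ : EuclideanSpace ℝ (Fin m)) (δ : ℝ) (hδ : 0 < δ)
    (hf1 : ∀ x, δ * ‖x - θ‖ ^ 2 ≤ (inner ℝ (x - θ) (f x) : ℝ))
    (κ₁ κ₂ : ℝ) (hκ₁ : 0 < κ₁) (hκ₂ : 0 < κ₂)
    (hf2 : ∀ x, ‖f x‖ ≤ κ₁ * ‖x - θ‖ + κ₂)
    (μs : ℕ → ℝ) (hμs : NormalSeq μs)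
    {Ω : Type*} {m0 : MeasurableSpace Ω} (P : Measure Ω) [IsProbabilityMeasure P]
    (ξ : ℕ → Ω → EuclideanSpace ℝ (Fin m))
    (hser : ∀ᵐ ω ∂P, ∃ l : EuclideanSpace ℝ (Fin m),
      Filter.Tendsto (fun n => ∑ i ∈ Finset.range n, μs i • ξ (i + 1) ω)
        Filter.atTop (nhds l))
    (x0 : EuclideanSpace ℝ (Fin m)) (x : ℕ → Ω → EuclideanSpace ℝ (Fin m))
    (hx0 : ∀ ω, x 0 ω = x0)
    (hxrec : ∀ n ω, x (n + 1) ω = x n ω - μs n • (f (x n ω) + ξ (n + 1) ω)) :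
    ∀ᵐ ω ∂P, Filter.Tendsto (fun n => x n ω) Filter.atTop (nhds θ) := by
  obtain ⟨hμ0', hμIoo, hμdiv, hμ0⟩ := hμs
  have hμpos : ∀ n, 0 < μs n := by
    intro n
    match n with
    | 0 => rw [hμ0']; norm_num
    | (k+1) => exact (hμIoo (k+1) (Nat.le_add_left 1 k)).1
  filter_upwards [hser] with ω hω
  obtain ⟨l, hl⟩ := hω
  set g : ℕ → EuclideanSpace ℝ (Fin m) := fun n => x n ω with hg
  set S : ℕ → EuclideanSpace ℝ (Fin m) := fun n => ∑ i ∈ Finset.range n, μs i • ξ (i + 1) ω with hS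
  set T : ℕ → EuclideanSpace ℝ (Fin m) := fun n => l - S n with hT
  have hT0 : Tendsto T atTop (nhds 0) := by
    have := hl.const_sub l
    simpa using this
  set t : ℕ → ℝ := fun n => ‖T n‖ with ht
  have ht0 : Tendsto t atTop (nhds 0) := by simpa using hT0.norm
  have htnn : ∀ n, 0 ≤ t n := fun n => norm_nonneg _
  obtain ⟨K, hK⟩ := ht0.bddAbove_range
  have hKt : ∀ n, t n ≤ K := fun n => hK (Set.mem_range_self n)
  have hK0 : 0 ≤ K := le_trans (htnn 0) (hKt 0)
  set C : ℝ := κ₁ * K + κ₂ with hC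
  have hC0 : 0 < C := by positivity
  set w : ℕ → EuclideanSpace ℝ (Fin m) := fun n => g n - T n - θ with hw
  have hwrec : ∀ n, w (n+1) = w n - μs n • f (g n) := by
    intro n
    simp only [hw, hg, hT, hS, hxrec n ω, Finset.sum_range_succ, smul_add]
    abel
  set a : ℕ → ℝ := fun n => ‖w n‖^2 with ha
  set β : ℕ → ℝ := fun n => 2*(2*δ+κ₁)*t n + 2*κ₁^2*μs n with hβ
  set γv : ℕ → ℝ := fun n => 2*(2*δ+κ₁+C)*t n + 2*C^2*μs n with hγv
  have hβ0 : Tendsto β atTop (nhds 0) := by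
    have := (ht0.const_mul (2*(2*δ+κ₁))).add (hμ0.const_mul (2*κ₁^2))
    simpa using this
  have hγ0 : Tendsto γv atTop (nhds 0) := by
    have := (ht0.const_mul (2*(2*δ+κ₁+C))).add (hμ0.const_mul (2*C^2))
    simpa using this
  have hann : ∀ n, 0 ≤ a n := fun n => sq_nonneg _
  have hrec' : ∀ n, a (n+1) ≤ a n * (1 - 2*δ*μs n + μs n * β n) + μs n * γv n := by
    intro n
    have hu : g n - θ = w n + T n := by simp only [hw]; abel
    have hwu : w n = (g n - θ) - T n := by simp only [hw]; abel
    set v : ℝ := ‖w n‖ with hv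
    set F : ℝ := ‖f (g n)‖ with hF
    set U : ℝ := ‖g n - θ‖ with hU
    have hFnn : 0 ≤ F := norm_nonneg _
    have hvnn : 0 ≤ v := norm_nonneg _
    have hUnn : 0 ≤ U := norm_nonneg _
    have hμn := hμpos n
    have e1 : a (n+1) = v^2 - 2*(μs n)*((inner ℝ (g n - θ) (f (g n)) : ℝ)
        - (inner ℝ (T n) (f (g n)) : ℝ)) + (μs n)^2 * F^2 := by
      have h11 : a (n+1) = ‖w n - μs n • f (g n)‖^2 := by rw [ha]; simp only [hwrec n]
      have esplit : (inner ℝ (w n) (f (g n)) : ℝ)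
          = (inner ℝ (g n - θ) (f (g n)) : ℝ) - (inner ℝ (T n) (f (g n)) : ℝ) := by
        rw [hwu, inner_sub_left]
      rw [h11, norm_sub_sq_real, real_inner_smul_right, norm_smul, Real.norm_eq_abs,
        mul_pow, sq_abs, esplit]
      ring
    have e2 : δ * U^2 ≤ (inner ℝ (g n - θ) (f (g n)) : ℝ) := hf1 (g n)
    have e3 : (inner ℝ (T n) (f (g n)) : ℝ) ≤ t n * F := real_inner_le_norm _ _
    have e4 : v^2 - 2*v*t n ≤ U^2 := by
      have hlow : -(v * t n) ≤ (inner ℝ (w n) (T n) : ℝ) := by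
        have h12 : |(inner ℝ (w n) (T n) : ℝ)| ≤ v * t n := abs_real_inner_le_norm _ _
        have h13 := neg_abs_le (inner ℝ (w n) (T n) : ℝ)
        linarith
      have hTn : ‖T n‖ = t n := rfl
      have hvn : ‖w n‖ = v := rfl
      rw [hU, hu, norm_add_sq_real, hTn, hvn]
      nlinarith [sq_nonneg (t n), hlow]
    have e5 : F ≤ κ₁ * U + κ₂ := hf2 (g n)
    have e6 : U ≤ v + t n := by rw [hU, hu]; exact norm_add_le _ _
    have htn := htnn n
    have e7 : κ₁ * t n + κ₂ ≤ C := by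
      have := mul_le_mul_of_nonneg_left (hKt n) hκ₁.le
      rw [hC]; linarith
    have key := step_ineq δ κ₁ κ₂ C (μs n) v (t n) F U
      (inner ℝ (g n - θ) (f (g n)) : ℝ) (inner ℝ (T n) (f (g n)) : ℝ) (a (n+1))
      hδ hκ₁ hκ₂ hC0 hμn hvnn htn hFnn hUnn e1 e2 e3 e4 e5 e6 e7
    have hgoal : a n = v^2 := rfl
    rw [hgoal, hβ, hγv]
    exact key
  have ha0 : Tendsto a atTop (nhds 0) :=
    key_real δ hδ μs β γv a (fun n => (hμpos n).le) hann hμdiv hβ0 hγ0 hμ0 hrec'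
  have hwn : Tendsto (fun n => ‖w n‖) atTop (nhds 0) := by
    have := ha0.sqrt
    simp only [Real.sqrt_zero] at this
    refine this.congr fun n => ?_
    exact Real.sqrt_sq (norm_nonneg _)
  have hwv : Tendsto w atTop (nhds 0) := tendsto_zero_iff_norm_tendsto_zero.2 hwn
  have hfinal : Tendsto (fun n => w n + T n + θ) atTop (nhds θ) := by
    have := (hwv.add hT0).add_const θ
    simpa using this
  refine hfinal.congr fun n => ?_
  simp only [hw]
  abel
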